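/- For every fuse-k-expression φ there exists a fuse-k-expression φ' whose value is the same k-labeled graph (up to label-preserving isomorphism), which contains no useless operator occurrences, and such that for every fuse subterm θ_i(ψ) of φ': the argument has the form ψ = θ_{j_1}(⋯ θ_{j_r}(ψ_1 ⊕ ψ_2) ⋯) for some r ≥ 0, the evaluated graph G^ψ contains exactly two vertices of label i, and of these two vertices one belongs to G^{ψ_1} and the other to G^{ψ_2}. -/

import Mathlib

/-! ### `k`-labeled graphs and the basic operations on them -/

/-- A `k`-labeled graph: a simple graph together with a labeling of its vertices
by labels from `Fin k`. -/
structure LGraph (k : ℕ) where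
  V : Type
  G : SimpleGraph V
  lab : V → Fin k

namespace LGraph

variable {k : ℕ}

/-- The join operation `η_{a,b}`: add all edges between vertices of label `a`
and vertices of label `b`. -/
def join (a b : Fin k) (H : LGraph k) : LGraph k where
  V := H.V
  G :=
    { Adj := fun u v =>
        H.G.Adj u v ∨ (u ≠ v ∧ ((H.lab u = a ∧ H.lab v = b) ∨ (H.lab u = b ∧ H.lab v = a)))
      symm := by
        constructor
        intro u v h
        rcases h with h | ⟨hne, h⟩
        · exact Or.inl (H.G.adj_symm h)
        · refine Or.inr ⟨hne.symm, ?_⟩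
          rcases h with ⟨h1, h2⟩ | ⟨h1, h2⟩
          · exact Or.inr ⟨h2, h1⟩
          · exact Or.inl ⟨h2, h1⟩
      loopless := by
        constructor
        intro v h
        rcases h with h | ⟨hne, _⟩
        · exact H.G.loopless.irrefl v h
        · exact hne rfl }
  lab := H.lab

/-- The relabel operation `ρ_{a→b}`: every vertex of label `a` gets label `b` instead. -/
def relabel (a b : Fin k) (H : LGraph k) : LGraph k where
  V := H.V
  G := H.G
  lab := fun v => if H.lab v = a then b else H.lab v

/-- The fuse operation `θ_i`: replace all vertices of label `i` by a single new vertex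
(represented by `none`) of label `i` whose neighbourhood is the union of their
neighbourhoods. -/
def fuse (i : Fin k) (H : LGraph k) : LGraph k where
  V := Option {v : H.V // H.lab v ≠ i}
  G :=
    { Adj := fun x y =>
        match x, y with
        | some u, some v => H.G.Adj u.1 v.1
        | some u, none => ∃ w, H.lab w = i ∧ H.G.Adj u.1 w
        | none, some v => ∃ w, H.lab w = i ∧ H.G.Adj w v.1
        | none, none => False
      symm := by
        constructor
        rintro (_ | u) (_ | v) h
        · exact h
        · obtain ⟨w, hw, ha⟩ := h
          exact ⟨w, hw, ha.symm⟩
        · obtain ⟨w, hw, ha⟩ := h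
          exact ⟨w, hw, ha.symm⟩
        · exact H.G.adj_symm h
      loopless := by
        constructor
        rintro (_ | v) h
        · exact h
        · exact H.G.loopless.irrefl v.1 h }
  lab := fun x =>
    match x with
    | some u => H.lab u.1
    | none => i

/-- Disjoint union `H1 ⊕ H2` of two `k`-labeled graphs. -/
def union (H1 H2 : LGraph k) : LGraph k where
  V := H1.V ⊕ H2.V
  G := H1.G ⊕g H2.G
  lab := Sum.elim H1.lab H2.lab

/-- Label-preserving isomorphism of `k`-labeled graphs. -/
def LIso (H1 H2 : LGraph k) : Prop :=
  ∃ e : H1.G ≃g H2.G, ∀ v, H2.lab (e v) = H1.lab v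

/-- The occurrence of the join operator `η_{a,b}` applied to `H` is not useless,
i.e. it creates at least one new edge. -/
def joinUseful (a b : Fin k) (H : LGraph k) : Prop :=
  ∃ u v : H.V, u ≠ v ∧ H.lab u = a ∧ H.lab v = b ∧ ¬ H.G.Adj u v

/-- The occurrence of the fuse operator `θ_i` applied to `H` is not useless,
i.e. `H` has at least two vertices of label `i`. -/
def fuseUseful (i : Fin k) (H : LGraph k) : Prop :=
  ∃ u v : H.V, u ≠ v ∧ H.lab u = i ∧ H.lab v = i

/-- The occurrence of a relabel operator `ρ_{a→b}` applied to `H` is not useless,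
i.e. `H` has a vertex of label `a`. -/
def relabelUseful (a : Fin k) (H : LGraph k) : Prop :=
  ∃ v : H.V, H.lab v = a

/-- `relabelSeq i [a₁, …, a_q] H = ρ_{a₁→i}(⋯(ρ_{a_q→i}(H))⋯)`. -/
def relabelSeq (i : Fin k) : List (Fin k) → LGraph k → LGraph k
  | [], H => H
  | a :: as, H => relabel a i (relabelSeq i as H)

/-- None of the relabel operators in `relabelSeq i as H` is useless (this includes
that none of them has the form `ρ_{a→a}`). -/
def relabelSeqUseful (i : Fin k) : List (Fin k) → LGraph k → Prop
  | [], _ => True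
  | a :: as, H => relabelSeqUseful i as H ∧ a ≠ i ∧ relabelUseful a (relabelSeq i as H)

end LGraph

/-! ### Fuse-`k`-expressions -/

/-- A fuse-`k`-expression: introduce a vertex, disjoint union, join, relabel, fuse. -/
inductive FuseExpr (k : ℕ) where
  | intro (i : Fin k)
  | union (φ1 φ2 : FuseExpr k)
  | join (i j : Fin k) (φ : FuseExpr k)
  | relabel (i j : Fin k) (φ : FuseExpr k)
  | fuse (i : Fin k) (φ : FuseExpr k)

namespace FuseExpr

variable {k : ℕ}

/-- The single-vertex `k`-labeled graph with label `i`. -/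
def singleVertex (i : Fin k) : LGraph k := ⟨PUnit, ⊥, fun _ => i⟩

/-- The `k`-labeled graph `G^φ` obtained by evaluating a fuse-`k`-expression. -/
def eval : FuseExpr k → LGraph k
  | .intro i => singleVertex i
  | .union φ1 φ2 => LGraph.union φ1.eval φ2.eval
  | .join i j φ => LGraph.join i j φ.eval
  | .relabel i j φ => LGraph.relabel i j φ.eval
  | .fuse i φ => LGraph.fuse i φ.eval

/-- Well-formedness of a fuse-`k`-expression: joins and relabels use two distinct labels,
and every fuse `θ_i` is applied to a graph having a vertex of label `i`. -/
def WF : FuseExpr k → Prop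
  | .intro _ => True
  | .union φ1 φ2 => φ1.WF ∧ φ2.WF
  | .join i j φ => i ≠ j ∧ φ.WF
  | .relabel i j φ => i ≠ j ∧ φ.WF
  | .fuse i φ => φ.WF ∧ ∃ v, φ.eval.lab v = i

end FuseExpr

/-- A graph `G` admits a fuse-`k`-expression if some well-formed fuse-`k`-expression
evaluates to a labeled graph whose underlying simple graph is isomorphic to `G`. -/
def FuseAdmits {V : Type} (k : ℕ) (G : SimpleGraph V) : Prop :=
  ∃ φ : FuseExpr k, φ.WF ∧ Nonempty (φ.eval.G ≃g G)

namespace FuseExpr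

variable {k : ℕ}

/-- No operator occurrence in the fuse-`k`-expression is useless: every join creates a
new edge, every fuse fuses at least two vertices, every relabel `ρ_{i→j}` has `i ≠ j`
and is applied to a graph with a vertex of label `i`. -/
def NoUseless : FuseExpr k → Prop
  | .intro _ => True
  | .union φ1 φ2 => φ1.NoUseless ∧ φ2.NoUseless
  | .join i j φ => i ≠ j ∧ LGraph.joinUseful i j φ.eval ∧ φ.NoUseless
  | .relabel i j φ => i ≠ j ∧ LGraph.relabelUseful i φ.eval ∧ φ.NoUseless
  | .fuse i φ => LGraph.fuseUseful i φ.eval ∧ φ.NoUseless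

/-- The expression is a chain of fuse operators `θ_{j₁}(θ_{j₂}(⋯θ_{j_r}(ψ₁ ⊕ ψ₂)⋯))`
(with `r ≥ 0`) ending in a union node. -/
def IsFuseChainToUnion : FuseExpr k → Prop
  | .union _ _ => True
  | .fuse _ ψ => ψ.IsFuseChainToUnion
  | _ => False

/-- Every fuse subterm `θ_i(ψ)` has its argument `ψ` of the form
`θ_{j₁}(⋯θ_{j_r}(ψ₁ ⊕ ψ₂)⋯)`, i.e. every inner node on the path from a fuse node to
the topmost union node below it is itself a fuse node. -/
def FusesAboveUnions : FuseExpr k → Prop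
  | .intro _ => True
  | .union φ1 φ2 => φ1.FusesAboveUnions ∧ φ2.FusesAboveUnions
  | .join _ _ φ => φ.FusesAboveUnions
  | .relabel _ _ φ => φ.FusesAboveUnions
  | .fuse _ φ => φ.IsFuseChainToUnion ∧ φ.FusesAboveUnions

end FuseExpr

/-- The `k`-labeled graph `H` has exactly one vertex of label `i`. -/
def ExactlyOne {k : ℕ} (H : LGraph k) (i : Fin k) : Prop :=
  ∃! v : H.V, H.lab v = i

/-- The `k`-labeled graph `H` has exactly two vertices of label `i`. -/
def ExactlyTwo {k : ℕ} (H : LGraph k) (i : Fin k) : Prop :=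
  ∃ u v : H.V, u ≠ v ∧ H.lab u = i ∧ H.lab v = i ∧
    ∀ w : H.V, H.lab w = i → w = u ∨ w = v

namespace FuseExpr

variable {k : ℕ}

/-- The expression is a chain of fuses ending in a union `ψ₁ ⊕ ψ₂` such that each of
`G^{ψ₁}` and `G^{ψ₂}` contains exactly one vertex of label `i` (so the two vertices of
label `i` above the union come one from each side). -/
def ChainWithOneFromEachSide (i : Fin k) : FuseExpr k → Prop
  | .union ψ1 ψ2 => ExactlyOne ψ1.eval i ∧ ExactlyOne ψ2.eval i
  | .fuse _ ψ => ChainWithOneFromEachSide i ψ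
  | _ => False

/-- Every fuse subterm `θ_i(ψ)` of the expression satisfies: `ψ` is a chain of fuses
over a union, `G^ψ` contains exactly two vertices of label `i`, and of these two
vertices one comes from each side of the union. -/
def FusesExactlyTwoFromDifferentSides : FuseExpr k → Prop
  | .intro _ => True
  | .union φ1 φ2 => φ1.FusesExactlyTwoFromDifferentSides ∧ φ2.FusesExactlyTwoFromDifferentSides
  | .join _ _ φ => φ.FusesExactlyTwoFromDifferentSides
  | .relabel _ _ φ => φ.FusesExactlyTwoFromDifferentSides
  | .fuse i φ => ExactlyTwo φ.eval i ∧ φ.ChainWithOneFromEachSide i ∧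
      φ.FusesExactlyTwoFromDifferentSides

end FuseExpr

/-! ### Auxiliary development -/


namespace LGraph
open Classical

variable {k : ℕ}

/-- Merge all vertices whose label satisfies `S` into a single vertex labeled `i`. -/
def merge (S : Fin k → Prop) (i : Fin k) (H : LGraph k) : LGraph k where
  V := Option {v : H.V // ¬ S (H.lab v)}
  G :=
    { Adj := fun x y =>
        match x, y with
        | some u, some v => H.G.Adj u.1 v.1
        | some u, none => ∃ w, S (H.lab w) ∧ H.G.Adj u.1 w
        | none, some v => ∃ w, S (H.lab w) ∧ H.G.Adj w v.1
        | none, none => False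
      symm := by
        constructor
        rintro (_ | u) (_ | v) h
        · exact h
        · obtain ⟨w, hw, ha⟩ := h
          exact ⟨w, hw, ha.symm⟩
        · obtain ⟨w, hw, ha⟩ := h
          exact ⟨w, hw, ha.symm⟩
        · exact H.G.adj_symm h
      loopless := by
        constructor
        rintro (_ | v) h
        · exact h
        · exact H.G.loopless.irrefl v.1 h }
  lab := fun x =>
    match x with
    | some u => H.lab u.1
    | none => i

theorem LIso.refl (H : LGraph k) : LIso H H := ⟨RelIso.refl _, fun _ => rfl⟩

theorem LIso.symm {H1 H2 : LGraph k} (h : LIso H1 H2) : LIso H2 H1 := by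
  obtain ⟨e, hl⟩ := h
  refine ⟨e.symm, fun v => ?_⟩
  rw [← hl (e.symm v)]
  congr 1
  exact e.apply_symm_apply v

theorem LIso.trans {H1 H2 H3 : LGraph k} (h : LIso H1 H2) (h' : LIso H2 H3) : LIso H1 H3 := by
  obtain ⟨e, hl⟩ := h
  obtain ⟨e', hl'⟩ := h'
  exact ⟨e.trans e', fun v => (hl' (e v)).trans (hl v)⟩

/-- Build a label-preserving isomorphism from an equivalence of vertices. -/
theorem LIso.mk' {H1 H2 : LGraph k} (e : H1.V ≃ H2.V)
    (hadj : ∀ u v, H2.G.Adj (e u) (e v) ↔ H1.G.Adj u v)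
    (hlab : ∀ v, H2.lab (e v) = H1.lab v) : LIso H1 H2 :=
  ⟨⟨e, fun {u v} => hadj u v⟩, hlab⟩

end LGraph
namespace LGraph

variable {k : ℕ} {S S' : Fin k → Prop} {i : Fin k}

theorem merge_congr {H1 H2 : LGraph k} (e : H1.G ≃g H2.G)
    (hS : ∀ v, S (H1.lab v) ↔ S' (H2.lab (e v)))
    (hlab : ∀ v, ¬ S (H1.lab v) → H2.lab (e v) = H1.lab v) :
    LIso (merge S i H1) (merge S' i H2) := by
  refine LIso.mk' (Equiv.optionCongr (e.toEquiv.subtypeEquiv fun v => not_congr (hS v)))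
    ?_ ?_
  · rintro (_ | u) (_ | v)
    · exact Iff.rfl
    · show (∃ w, S' (H2.lab w) ∧ H2.G.Adj w (e v.1)) ↔ _
      constructor
      · rintro ⟨w, hw, ha⟩
        refine ⟨e.symm w, ?_, ?_⟩
        · rw [hS (e.symm w), e.apply_symm_apply]; exact hw
        · have := e.symm.map_rel_iff.mpr ha
          simpa using this
      · rintro ⟨w, hw, ha⟩
        exact ⟨e w, by rwa [← hS w], e.map_rel_iff.mpr ha⟩
    · show (∃ w, S' (H2.lab w) ∧ H2.G.Adj (e u.1) w) ↔ _
      constructor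
      · rintro ⟨w, hw, ha⟩
        refine ⟨e.symm w, ?_, ?_⟩
        · rw [hS (e.symm w), e.apply_symm_apply]; exact hw
        · have := e.symm.map_rel_iff.mpr ha
          simpa using this
      · rintro ⟨w, hw, ha⟩
        exact ⟨e w, by rwa [← hS w], e.map_rel_iff.mpr ha⟩
    · exact e.map_rel_iff
  · rintro (_ | u)
    · rfl
    · exact hlab u.1 u.2

theorem fuse_merge (i : Fin k) (H : LGraph k) : LIso (fuse i H) (merge (fun x => x = i) i H) := by
  refine LIso.mk' (Equiv.optionCongr (Equiv.subtypeEquivRight fun v => Iff.rfl)) ?_ ?_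
  · rintro (_ | u) (_ | v) <;> exact Iff.rfl
  · rintro (_ | u) <;> rfl

theorem fuse_congr {H1 H2 : LGraph k} (h : LIso H1 H2) : LIso (fuse i H1) (fuse i H2) := by
  obtain ⟨e, hl⟩ := h
  refine (fuse_merge i H1).trans (LIso.trans ?_ (fuse_merge i H2).symm)
  exact merge_congr e (fun v => by rw [hl]) (fun v _ => hl v)

theorem join_congr {a b : Fin k} {H1 H2 : LGraph k} (h : LIso H1 H2) :
    LIso (join a b H1) (join a b H2) := by
  obtain ⟨e, hl⟩ := h
  refine LIso.mk' e.toEquiv (fun u v => ?_) hl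
  have l1 : ∀ w c, H2.lab (e w) = c ↔ H1.lab w = c := fun w c => by rw [hl w]
  exact or_congr e.map_rel_iff (and_congr (not_congr e.toEquiv.apply_eq_iff_eq)
    (or_congr (and_congr (l1 u a) (l1 v b)) (and_congr (l1 u b) (l1 v a))))

theorem relabel_congr {a b : Fin k} {H1 H2 : LGraph k} (h : LIso H1 H2) :
    LIso (relabel a b H1) (relabel a b H2) := by
  obtain ⟨e, hl⟩ := h
  refine LIso.mk' e.toEquiv (fun u v => e.map_rel_iff) (fun v => ?_)
  show (if H2.lab (e v) = a then b else H2.lab (e v)) = (if H1.lab v = a then b else H1.lab v)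
  rw [hl v]

theorem union_congr {H1 H2 H1' H2' : LGraph k} (h1 : LIso H1 H1') (h2 : LIso H2 H2') :
    LIso (union H1 H2) (union H1' H2') := by
  obtain ⟨e1, hl1⟩ := h1
  obtain ⟨e2, hl2⟩ := h2
  refine LIso.mk' (Equiv.sumCongr e1.toEquiv e2.toEquiv) (fun u v => ?_) (fun v => ?_)
  · rcases u with u | u <;> rcases v with v | v
    · exact e1.map_rel_iff
    · exact Iff.rfl
    · exact Iff.rfl
    · exact e2.map_rel_iff
  · rcases v with v | v
    · exact hl1 v
    · exact hl2 v

theorem join_comm {a b : Fin k} (H : LGraph k) : LIso (join a b H) (join b a H) := by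
  refine LIso.mk' (Equiv.refl _) (fun u v => ?_) (fun v => rfl)
  show H.G.Adj u v ∨ _ ↔ H.G.Adj u v ∨ _
  tauto

theorem join_useless {a b : Fin k} {H : LGraph k} (h : ¬ joinUseful a b H) :
    LIso (join a b H) H := by
  rw [joinUseful] at h
  push_neg at h
  refine LIso.mk' (Equiv.refl _) (fun u v => ?_) (fun v => rfl)
  show H.G.Adj u v ↔ H.G.Adj u v ∨ _
  constructor
  · exact Or.inl
  · rintro (hA | ⟨hne, ⟨ha, hb⟩ | ⟨ha, hb⟩⟩)
    · exact hA
    · exact h u v hne ha hb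
    · exact H.G.adj_symm (h v u hne.symm hb ha)

theorem relabel_useless {a b : Fin k} {H : LGraph k} (h : ¬ relabelUseful a H) :
    LIso (relabel a b H) H := by
  rw [relabelUseful] at h
  push_neg at h
  refine LIso.mk' (Equiv.refl _) (fun u v => Iff.rfl) (fun v => ?_)
  show H.lab v = (if H.lab v = a then b else H.lab v)
  rw [if_neg (h v)]

end LGraph
namespace LGraph

variable {k : ℕ} {S : Fin k → Prop} {i : Fin k}

theorem merge_join_comm {a b : Fin k} {H : LGraph k} (hi : S i) (ha : ¬ S a) (hb : ¬ S b) :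
    LIso (merge S i (join a b H)) (join a b (merge S i H)) := by
  have hia : i ≠ a := fun h => ha (h ▸ hi)
  have hib : i ≠ b := fun h => hb (h ▸ hi)
  refine LIso.mk' (Equiv.refl _) (fun u v => ?_) (fun v => by rcases v with _ | v <;> rfl)
  rcases u with _ | u <;> rcases v with _ | v
  · show ((merge S i H).G.Adj none none ∨ _) ↔ False
    simp only [iff_false]
    rintro (h | ⟨hne, _⟩)
    · exact h
    · exact hne rfl
  · show ((∃ w, S (H.lab w) ∧ H.G.Adj w v.1) ∨ ((none : (merge S i H).V) ≠ some v ∧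
        ((i = a ∧ H.lab v.1 = b) ∨ (i = b ∧ H.lab v.1 = a)))) ↔
      (∃ w, S (H.lab w) ∧ (H.G.Adj w v.1 ∨ (w ≠ v.1 ∧
        ((H.lab w = a ∧ H.lab v.1 = b) ∨ (H.lab w = b ∧ H.lab v.1 = a)))))
    constructor
    · rintro (⟨w, hw, hA⟩ | ⟨-, ⟨h1, -⟩ | ⟨h1, -⟩⟩)
      · exact ⟨w, hw, Or.inl hA⟩
      · exact absurd h1 hia
      · exact absurd h1 hib
    · rintro ⟨w, hw, hA | ⟨-, ⟨h1, -⟩ | ⟨h1, -⟩⟩⟩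
      · exact Or.inl ⟨w, hw, hA⟩
      · exact absurd hw (h1 ▸ ha)
      · exact absurd hw (h1 ▸ hb)
  · show ((∃ w, S (H.lab w) ∧ H.G.Adj u.1 w) ∨ ((some u : (merge S i H).V) ≠ none ∧
        ((H.lab u.1 = a ∧ i = b) ∨ (H.lab u.1 = b ∧ i = a)))) ↔
      (∃ w, S (H.lab w) ∧ (H.G.Adj u.1 w ∨ (u.1 ≠ w ∧
        ((H.lab u.1 = a ∧ H.lab w = b) ∨ (H.lab u.1 = b ∧ H.lab w = a)))))
    constructor
    · rintro (⟨w, hw, hA⟩ | ⟨-, ⟨-, h2⟩ | ⟨-, h2⟩⟩)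
      · exact ⟨w, hw, Or.inl hA⟩
      · exact absurd h2 hib
      · exact absurd h2 hia
    · rintro ⟨w, hw, hA | ⟨-, ⟨-, h2⟩ | ⟨-, h2⟩⟩⟩
      · exact Or.inl ⟨w, hw, hA⟩
      · exact absurd hw (h2 ▸ hb)
      · exact absurd hw (h2 ▸ ha)
  · show (H.G.Adj u.1 v.1 ∨ ((some u : (merge S i H).V) ≠ some v ∧
        ((H.lab u.1 = a ∧ H.lab v.1 = b) ∨ (H.lab u.1 = b ∧ H.lab v.1 = a)))) ↔
      (H.G.Adj u.1 v.1 ∨ (u.1 ≠ v.1 ∧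
        ((H.lab u.1 = a ∧ H.lab v.1 = b) ∨ (H.lab u.1 = b ∧ H.lab v.1 = a))))
    have hne : (some u : (merge S i H).V) ≠ some v ↔ u.1 ≠ v.1 := by
      exact not_congr (Option.some_inj.trans Subtype.ext_iff)
    rw [hne]

end LGraph
namespace LGraph

variable {k : ℕ} {S : Fin k → Prop} {i : Fin k}

theorem merge_join_absorb {a b : Fin k} {H : LGraph k} (hi : S i) (hSa : S a) (hb : ¬ S b)
    (hab : a ≠ b) (hA : ∃ w, H.lab w = a) :
    LIso (merge S i (join a b H)) (join i b (merge S i H)) := by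
  have hib : i ≠ b := fun h => hb (h ▸ hi)
  refine LIso.mk' (Equiv.refl _) (fun u v => ?_) (fun v => by rcases v with _ | v <;> rfl)
  rcases u with _ | u <;> rcases v with _ | v
  · show ((merge S i H).G.Adj none none ∨ ((none : (merge S i H).V) ≠ none ∧ _)) ↔ False
    simp only [iff_false]
    rintro (h | ⟨hne, _⟩)
    · exact h
    · exact hne rfl
  · show ((∃ w, S (H.lab w) ∧ H.G.Adj w v.1) ∨ ((none : (merge S i H).V) ≠ some v ∧
        ((i = i ∧ H.lab v.1 = b) ∨ (i = b ∧ H.lab v.1 = i)))) ↔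
      (∃ w, S (H.lab w) ∧ (H.G.Adj w v.1 ∨ (w ≠ v.1 ∧
        ((H.lab w = a ∧ H.lab v.1 = b) ∨ (H.lab w = b ∧ H.lab v.1 = a)))))
    constructor
    · rintro (⟨w, hw, hAd⟩ | ⟨-, ⟨-, h2⟩ | ⟨h1, -⟩⟩)
      · exact ⟨w, hw, Or.inl hAd⟩
      · obtain ⟨w0, hw0⟩ := hA
        refine ⟨w0, by rw [hw0]; exact hSa, Or.inr ⟨?_, Or.inl ⟨hw0, h2⟩⟩⟩
        intro he
        exact hb (by rw [← h2, ← he, hw0] at hb ⊢; exact (absurd hw0 (by rw [he, h2]; exact fun hh => hab (hh ▸ rfl)))) |>.elim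
      · exact absurd h1 hib
    · rintro ⟨w, hw, hAd | ⟨hne, ⟨h1, h2⟩ | ⟨h1, h2⟩⟩⟩
      · exact Or.inl ⟨w, hw, hAd⟩
      · exact Or.inr ⟨(fun hh => by cases hh), Or.inl ⟨rfl, h2⟩⟩
      · exact absurd hw (h1 ▸ hb)
  · show ((∃ w, S (H.lab w) ∧ H.G.Adj u.1 w) ∨ ((some u : (merge S i H).V) ≠ none ∧
        ((H.lab u.1 = i ∧ i = b) ∨ (H.lab u.1 = b ∧ i = i)))) ↔
      (∃ w, S (H.lab w) ∧ (H.G.Adj u.1 w ∨ (u.1 ≠ w ∧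
        ((H.lab u.1 = a ∧ H.lab w = b) ∨ (H.lab u.1 = b ∧ H.lab w = a)))))
    constructor
    · rintro (⟨w, hw, hAd⟩ | ⟨-, ⟨-, h2⟩ | ⟨h1, -⟩⟩)
      · exact ⟨w, hw, Or.inl hAd⟩
      · exact absurd h2 hib
      · obtain ⟨w0, hw0⟩ := hA
        refine ⟨w0, by rw [hw0]; exact hSa, Or.inr ⟨?_, Or.inr ⟨h1, hw0⟩⟩⟩
        intro he
        rw [he, hw0] at h1
        exact hab h1
    · rintro ⟨w, hw, hAd | ⟨hne, ⟨h1, h2⟩ | ⟨h1, h2⟩⟩⟩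
      · exact Or.inl ⟨w, hw, hAd⟩
      · exact absurd (h1 ▸ u.2) (by simp [hSa])
      · exact Or.inr ⟨(fun hh => by cases hh), Or.inr ⟨h1, rfl⟩⟩
  · show (H.G.Adj u.1 v.1 ∨ ((some u : (merge S i H).V) ≠ some v ∧
        ((H.lab u.1 = i ∧ H.lab v.1 = b) ∨ (H.lab u.1 = b ∧ H.lab v.1 = i)))) ↔
      (H.G.Adj u.1 v.1 ∨ (u.1 ≠ v.1 ∧
        ((H.lab u.1 = a ∧ H.lab v.1 = b) ∨ (H.lab u.1 = b ∧ H.lab v.1 = a))))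
    constructor
    · rintro (hAd | ⟨-, ⟨h1, -⟩ | ⟨-, h2⟩⟩)
      · exact Or.inl hAd
      · exact absurd (h1 ▸ u.2) (by simp [hi])
      · exact absurd (h2 ▸ v.2) (by simp [hi])
    · rintro (hAd | ⟨-, ⟨h1, -⟩ | ⟨-, h2⟩⟩)
      · exact Or.inl hAd
      · exact absurd (h1 ▸ u.2) (by simp [hSa])
      · exact absurd (h2 ▸ v.2) (by simp [hSa])

theorem merge_join_inert {a b : Fin k} {H : LGraph k} (hSa : S a) (hSb : S b) :
    LIso (merge S i (join a b H)) (merge S i H) := by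
  refine LIso.mk' (Equiv.refl _) (fun u v => ?_) (fun v => by rcases v with _ | v <;> rfl)
  rcases u with _ | u <;> rcases v with _ | v
  · exact Iff.rfl
  · show (∃ w, S (H.lab w) ∧ H.G.Adj w v.1) ↔
      (∃ w, S (H.lab w) ∧ (H.G.Adj w v.1 ∨ (w ≠ v.1 ∧
        ((H.lab w = a ∧ H.lab v.1 = b) ∨ (H.lab w = b ∧ H.lab v.1 = a)))))
    constructor
    · rintro ⟨w, hw, hAd⟩
      exact ⟨w, hw, Or.inl hAd⟩
    · rintro ⟨w, hw, hAd | ⟨-, ⟨-, h2⟩ | ⟨-, h2⟩⟩⟩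
      · exact ⟨w, hw, hAd⟩
      · exact absurd (h2 ▸ v.2) (by simp [hSb])
      · exact absurd (h2 ▸ v.2) (by simp [hSa])
  · show (∃ w, S (H.lab w) ∧ H.G.Adj u.1 w) ↔
      (∃ w, S (H.lab w) ∧ (H.G.Adj u.1 w ∨ (u.1 ≠ w ∧
        ((H.lab u.1 = a ∧ H.lab w = b) ∨ (H.lab u.1 = b ∧ H.lab w = a)))))
    constructor
    · rintro ⟨w, hw, hAd⟩
      exact ⟨w, hw, Or.inl hAd⟩
    · rintro ⟨w, hw, hAd | ⟨-, ⟨h1, -⟩ | ⟨h1, -⟩⟩⟩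
      · exact ⟨w, hw, hAd⟩
      · exact absurd (h1 ▸ u.2) (by simp [hSa])
      · exact absurd (h1 ▸ u.2) (by simp [hSb])
  · show H.G.Adj u.1 v.1 ↔ (H.G.Adj u.1 v.1 ∨ (u.1 ≠ v.1 ∧
        ((H.lab u.1 = a ∧ H.lab v.1 = b) ∨ (H.lab u.1 = b ∧ H.lab v.1 = a))))
    constructor
    · exact Or.inl
    · rintro (hAd | ⟨-, ⟨h1, -⟩ | ⟨h1, -⟩⟩)
      · exact hAd
      · exact absurd (h1 ▸ u.2) (by simp [hSa])
      · exact absurd (h1 ▸ u.2) (by simp [hSb])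

end LGraph
namespace LGraph

variable {k : ℕ} {S : Fin k → Prop} {i : Fin k}

theorem merge_relabel_comm {a b : Fin k} {H : LGraph k} (hi : S i) (ha : ¬ S a) (hb : ¬ S b) :
    LIso (merge S i (relabel a b H)) (relabel a b (merge S i H)) := by
  have hia : i ≠ a := fun h => ha (h ▸ hi)
  have hrho : ∀ w : H.V, S ((relabel a b H).lab w) ↔ S (H.lab w) := by
    intro w
    show S (if H.lab w = a then b else H.lab w) ↔ _
    by_cases h : H.lab w = a
    · rw [if_pos h, h]
      exact iff_of_false hb ha
    · rw [if_neg h]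
  refine LIso.mk' (Equiv.optionCongr (Equiv.subtypeEquivRight fun v => not_congr (hrho v)))
    (fun u v => ?_) (fun v => ?_)
  · rcases u with _ | u <;> rcases v with _ | v
    · exact Iff.rfl
    · show (∃ w, S (H.lab w) ∧ H.G.Adj w v.1) ↔
        (∃ w, S ((relabel a b H).lab w) ∧ H.G.Adj w v.1)
      exact exists_congr fun w => and_congr_left fun _ => (hrho w).symm
    · show (∃ w, S (H.lab w) ∧ H.G.Adj u.1 w) ↔
        (∃ w, S ((relabel a b H).lab w) ∧ H.G.Adj u.1 w)
      exact exists_congr fun w => and_congr_left fun _ => (hrho w).symm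
    · exact Iff.rfl
  · rcases v with _ | v
    · show (if i = a then b else i) = i
      rw [if_neg hia]
    · rfl

theorem merge_relabel_absorbIn {a b : Fin k} {H : LGraph k} (hSb : S b) :
    LIso (merge S i (relabel a b H)) (merge (fun x => S x ∨ x = a) i H) := by
  have hrho : ∀ w : H.V, S ((relabel a b H).lab w) ↔ (S (H.lab w) ∨ H.lab w = a) := by
    intro w
    show S (if H.lab w = a then b else H.lab w) ↔ _
    by_cases h : H.lab w = a
    · rw [if_pos h]
      exact iff_of_true hSb (Or.inr h)
    · rw [if_neg h]
      exact ⟨Or.inl, fun hh => hh.resolve_right h⟩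
  refine LIso.mk' (Equiv.optionCongr (Equiv.subtypeEquivRight fun v => not_congr (hrho v)))
    (fun u v => ?_) (fun v => ?_)
  · rcases u with _ | u <;> rcases v with _ | v
    · exact Iff.rfl
    · show (∃ w, (S (H.lab w) ∨ H.lab w = a) ∧ H.G.Adj w v.1) ↔
        (∃ w, S ((relabel a b H).lab w) ∧ H.G.Adj w v.1)
      exact exists_congr fun w => and_congr_left fun _ => (hrho w).symm
    · show (∃ w, (S (H.lab w) ∨ H.lab w = a) ∧ H.G.Adj u.1 w) ↔
        (∃ w, S ((relabel a b H).lab w) ∧ H.G.Adj u.1 w)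
      exact exists_congr fun w => and_congr_left fun _ => (hrho w).symm
    · exact Iff.rfl
  · rcases v with _ | v
    · rfl
    · show H.lab v.1 = (if H.lab v.1 = a then b else H.lab v.1)
      have : ¬ H.lab v.1 = a := fun h => v.2 ((hrho v.1).mpr (Or.inr h))
      rw [if_neg this]

theorem merge_relabel_out {a b : Fin k} {H : LGraph k} (hSa : S a) (hb : ¬ S b)
    (hi : S i) (hia : i ≠ a) :
    LIso (merge S i (relabel a b H)) (relabel a b (merge (fun x => S x ∧ x ≠ a) i H)) := by
  have hrho : ∀ w : H.V, S ((relabel a b H).lab w) ↔ (S (H.lab w) ∧ H.lab w ≠ a) := by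
    intro w
    show S (if H.lab w = a then b else H.lab w) ↔ _
    by_cases h : H.lab w = a
    · rw [if_pos h]
      exact iff_of_false hb (fun hh => hh.2 h)
    · rw [if_neg h]
      exact ⟨fun hh => ⟨hh, h⟩, fun hh => hh.1⟩
  refine LIso.mk' (Equiv.optionCongr (Equiv.subtypeEquivRight fun v => not_congr (hrho v)))
    (fun u v => ?_) (fun v => ?_)
  · rcases u with _ | u <;> rcases v with _ | v
    · exact Iff.rfl
    · show (∃ w, (S (H.lab w) ∧ H.lab w ≠ a) ∧ H.G.Adj w v.1) ↔
        (∃ w, S ((relabel a b H).lab w) ∧ H.G.Adj w v.1)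
      exact exists_congr fun w => and_congr_left fun _ => (hrho w).symm
    · show (∃ w, (S (H.lab w) ∧ H.lab w ≠ a) ∧ H.G.Adj u.1 w) ↔
        (∃ w, S ((relabel a b H).lab w) ∧ H.G.Adj u.1 w)
      exact exists_congr fun w => and_congr_left fun _ => (hrho w).symm
    · exact Iff.rfl
  · rcases v with _ | v
    · show (if i = a then b else i) = i
      rw [if_neg hia]
    · rfl

theorem merge_relabel_out' {a b t : Fin k} {H : LGraph k} (hSa : S a) (hb : ¬ S b)
    (hSt : S t) (hta : t ≠ a) :
    LIso (merge S i (relabel a b H))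
      (relabel t i (relabel a b (merge (fun x => S x ∧ x ≠ a) t H))) := by
  have hrho : ∀ w : H.V, S ((relabel a b H).lab w) ↔ (S (H.lab w) ∧ H.lab w ≠ a) := by
    intro w
    show S (if H.lab w = a then b else H.lab w) ↔ _
    by_cases h : H.lab w = a
    · rw [if_pos h]
      exact iff_of_false hb (fun hh => hh.2 h)
    · rw [if_neg h]
      exact ⟨fun hh => ⟨hh, h⟩, fun hh => hh.1⟩
  refine LIso.mk' (Equiv.optionCongr (Equiv.subtypeEquivRight fun v => not_congr (hrho v)))
    (fun u v => ?_) (fun v => ?_)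
  · rcases u with _ | u <;> rcases v with _ | v
    · exact Iff.rfl
    · show (∃ w, (S (H.lab w) ∧ H.lab w ≠ a) ∧ H.G.Adj w v.1) ↔
        (∃ w, S ((relabel a b H).lab w) ∧ H.G.Adj w v.1)
      exact exists_congr fun w => and_congr_left fun _ => (hrho w).symm
    · show (∃ w, (S (H.lab w) ∧ H.lab w ≠ a) ∧ H.G.Adj u.1 w) ↔
        (∃ w, S ((relabel a b H).lab w) ∧ H.G.Adj u.1 w)
      exact exists_congr fun w => and_congr_left fun _ => (hrho w).symm
    · exact Iff.rfl
  · rcases v with _ | v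
    · show (if (if t = a then b else t) = t then i else (if t = a then b else t)) = i
      rw [if_neg hta, if_pos rfl]
    · show (if (if H.lab v.1 = a then b else H.lab v.1) = t then i
          else (if H.lab v.1 = a then b else H.lab v.1)) =
        (if H.lab v.1 = a then b else H.lab v.1)
      by_cases h : H.lab v.1 = a
      · rw [if_pos h]
        have : b ≠ t := fun hh => hb (hh ▸ hSt)
        rw [if_neg this]
      · rw [if_neg h]
        have : H.lab v.1 ≠ t := by
          intro hh
          exact v.2 ((hrho v.1).mpr ⟨hh ▸ hSt, h⟩)
        rw [if_neg this]

end LGraph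
namespace LGraph

variable {k : ℕ} {S : Fin k → Prop} {i : Fin k}

/-- If the fused label `j` lies in the merge class, fusing first is inert. -/
theorem merge_fuse_absorb {j : Fin k} {H : LGraph k} (hSj : S j) :
    LIso (merge S i (fuse j H)) (merge S i H) := by
  refine LIso.mk'
    ⟨fun x => match x with
      | none => none
      | some ⟨none, h⟩ => absurd hSj h
      | some ⟨some v, h⟩ => some ⟨v.1, h⟩,
     fun y => match y with
      | none => none
      | some ⟨v, h⟩ => some ⟨some ⟨v, fun hl => h (by rw [hl]; exact hSj)⟩, h⟩,
     ?_, ?_⟩ ?_ ?_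
  · rintro (_ | ⟨_ | v, h⟩)
    · rfl
    · exact absurd hSj h
    · rfl
  · rintro (_ | ⟨v, h⟩) <;> rfl
  · rintro (_ | ⟨_ | u, hu⟩) (_ | ⟨_ | v, hv⟩) <;>
      first
        | exact absurd hSj hu
        | exact absurd hSj hv
        | skip
    · exact Iff.rfl
    · show (∃ w, S (H.lab w) ∧ H.G.Adj w v.1) ↔
        (∃ w : (fuse j H).V, S ((fuse j H).lab w) ∧ (fuse j H).G.Adj w (some v))
      constructor
      · rintro ⟨w, hw, hAd⟩
        by_cases hl : H.lab w = j
        · exact ⟨none, hSj, ⟨w, hl, hAd⟩⟩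
        · exact ⟨some ⟨w, hl⟩, hw, hAd⟩
      · rintro ⟨_ | w, hw, hAd⟩
        · obtain ⟨w', hw', hAd'⟩ := hAd
          exact ⟨w', by rw [hw']; exact hSj, hAd'⟩
        · exact ⟨w.1, hw, hAd⟩
    · show (∃ w, S (H.lab w) ∧ H.G.Adj u.1 w) ↔
        (∃ w : (fuse j H).V, S ((fuse j H).lab w) ∧ (fuse j H).G.Adj (some u) w)
      constructor
      · rintro ⟨w, hw, hAd⟩
        by_cases hl : H.lab w = j
        · exact ⟨none, hSj, ⟨w, hl, hAd⟩⟩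
        · exact ⟨some ⟨w, hl⟩, hw, hAd⟩
      · rintro ⟨_ | w, hw, hAd⟩
        · obtain ⟨w', hw', hAd'⟩ := hAd
          exact ⟨w', by rw [hw']; exact hSj, hAd'⟩
        · exact ⟨w.1, hw, hAd⟩
    · exact Iff.rfl
  · rintro (_ | ⟨_ | v, h⟩)
    · rfl
    · exact absurd hSj h
    · rfl

/-- If the fused label `j` is outside the merge class, fuse and merge commute. -/
theorem merge_fuse_comm {j : Fin k} {H : LGraph k} (hi : S i) (hj : ¬ S j) :
    LIso (merge S i (fuse j H)) (fuse j (merge S i H)) := by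
  have hij : (i : Fin k) ≠ j := fun h => hj (h ▸ hi)
  refine LIso.mk'
    ⟨fun x => match x with
      | none => some ⟨none, hij⟩
      | some ⟨none, _⟩ => none
      | some ⟨some v, h⟩ => some ⟨some ⟨v.1, h⟩, v.2⟩,
     fun y => match y with
      | none => some ⟨none, hj⟩
      | some ⟨none, _⟩ => none
      | some ⟨some v, h⟩ => some ⟨some ⟨v.1, h⟩, v.2⟩,
     ?_, ?_⟩ ?_ ?_
  · rintro (_ | ⟨_ | v, h⟩) <;> rfl
  · rintro (_ | ⟨_ | v, h⟩) <;> rfl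
  · rintro (_ | ⟨_ | u, hu⟩) (_ | ⟨_ | v, hv⟩)
    · exact Iff.rfl
    · -- (none, j-fused)
      show (∃ w : (merge S i H).V, (merge S i H).lab w = j ∧ (merge S i H).G.Adj none w) ↔
        (∃ w : (fuse j H).V, S ((fuse j H).lab w) ∧ (fuse j H).G.Adj w none)
      constructor
      · rintro ⟨_ | w, hw, hAd⟩
        · exact absurd hw hij
        · obtain ⟨w', hw', hAd'⟩ := hAd
          exact ⟨some ⟨w', by intro hl; apply hj; first | rwa [hl] at hw | rwa [hw'] at hl | rwa [hl] at hw' | rwa [hw] at hl⟩, hw', ⟨w.1, hw, hAd'⟩⟩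
      · rintro ⟨_ | w, hw, hAd⟩
        · exact absurd hw hj
        · obtain ⟨w', hw', hAd'⟩ := hAd
          exact ⟨some ⟨w', by intro hl; apply hj; first | rwa [hl] at hw | rwa [hw'] at hl | rwa [hl] at hw' | rwa [hw] at hl⟩, hw', ⟨w.1, hw, hAd'⟩⟩
    · -- (none, ordinary v)
      show (∃ w, S (H.lab w) ∧ H.G.Adj w v.1) ↔
        (∃ w : (fuse j H).V, S ((fuse j H).lab w) ∧ (fuse j H).G.Adj w (some v))
      constructor
      · rintro ⟨w, hw, hAd⟩
        exact ⟨some ⟨w, by intro hl; apply hj; first | rwa [hl] at hw | rwa [hw'] at hl | rwa [hl] at hw' | rwa [hw] at hl⟩, hw, hAd⟩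
      · rintro ⟨_ | w, hw, hAd⟩
        · exact absurd hw hj
        · exact ⟨w.1, hw, hAd⟩
    · -- (j-fused, none)
      show (∃ w : (merge S i H).V, (merge S i H).lab w = j ∧ (merge S i H).G.Adj w none) ↔
        (∃ w : (fuse j H).V, S ((fuse j H).lab w) ∧ (fuse j H).G.Adj none w)
      constructor
      · rintro ⟨_ | w, hw, hAd⟩
        · exact absurd hw hij
        · obtain ⟨w', hw', hAd'⟩ := hAd
          exact ⟨some ⟨w', by intro hl; apply hj; first | rwa [hl] at hw | rwa [hw'] at hl | rwa [hl] at hw' | rwa [hw] at hl⟩, hw', ⟨w.1, hw, hAd'⟩⟩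
      · rintro ⟨_ | w, hw, hAd⟩
        · exact absurd hw hj
        · obtain ⟨w', hw', hAd'⟩ := hAd
          exact ⟨some ⟨w', by intro hl; apply hj; first | rwa [hl] at hw | rwa [hw'] at hl | rwa [hl] at hw' | rwa [hw] at hl⟩, hw', ⟨w.1, hw, hAd'⟩⟩
    · exact Iff.rfl
    · -- (j-fused, ordinary v)
      show (∃ w : (merge S i H).V, (merge S i H).lab w = j ∧
          (merge S i H).G.Adj w (some ⟨v.1, hv⟩)) ↔
        (∃ w, H.lab w = j ∧ H.G.Adj w v.1)
      constructor
      · rintro ⟨_ | w, hw, hAd⟩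
        · exact absurd hw hij
        · exact ⟨w.1, hw, hAd⟩
      · rintro ⟨w, hw, hAd⟩
        exact ⟨some ⟨w, by intro hl; apply hj; first | rwa [hl] at hw | rwa [hw'] at hl | rwa [hl] at hw' | rwa [hw] at hl⟩, hw, hAd⟩
    · -- (ordinary u, none)
      show (∃ w, S (H.lab w) ∧ H.G.Adj u.1 w) ↔
        (∃ w : (fuse j H).V, S ((fuse j H).lab w) ∧ (fuse j H).G.Adj (some u) w)
      constructor
      · rintro ⟨w, hw, hAd⟩
        exact ⟨some ⟨w, by intro hl; apply hj; first | rwa [hl] at hw | rwa [hw'] at hl | rwa [hl] at hw' | rwa [hw] at hl⟩, hw, hAd⟩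
      · rintro ⟨_ | w, hw, hAd⟩
        · exact absurd hw hj
        · exact ⟨w.1, hw, hAd⟩
    · -- (ordinary u, j-fused)
      show (∃ w : (merge S i H).V, (merge S i H).lab w = j ∧
          (merge S i H).G.Adj (some ⟨u.1, hu⟩) w) ↔
        (∃ w, H.lab w = j ∧ H.G.Adj u.1 w)
      constructor
      · rintro ⟨_ | w, hw, hAd⟩
        · exact absurd hw hij
        · exact ⟨w.1, hw, hAd⟩
      · rintro ⟨w, hw, hAd⟩
        exact ⟨some ⟨w, by intro hl; apply hj; first | rwa [hl] at hw | rwa [hw'] at hl | rwa [hl] at hw' | rwa [hw] at hl⟩, hw, hAd⟩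
    · exact Iff.rfl
  · rintro (_ | ⟨_ | v, h⟩) <;> rfl

end LGraph
namespace LGraph

variable {k : ℕ} {S : Fin k → Prop} {i : Fin k}

theorem merge_union_left {H1 H2 : LGraph k} (hS2 : ∀ b : H2.V, ¬ S (H2.lab b)) :
    LIso (merge S i (H1.union H2)) ((merge S i H1).union H2) := by
  refine LIso.mk'
    ⟨fun x => match x with
      | none => Sum.inl none
      | some ⟨Sum.inl a, h⟩ => Sum.inl (some ⟨a, h⟩)
      | some ⟨Sum.inr b, _⟩ => Sum.inr b,
     fun y => match y with
      | Sum.inl none => none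
      | Sum.inl (some a) => some ⟨Sum.inl a.1, a.2⟩
      | Sum.inr b => some ⟨Sum.inr b, hS2 b⟩,
     ?_, ?_⟩ ?_ ?_
  · rintro (_ | ⟨a | b, h⟩) <;> rfl
  · rintro ((_ | a) | b) <;> rfl
  · rintro (_ | ⟨a | b, hu⟩) (_ | ⟨a' | b', hv⟩)
    · exact Iff.rfl
    · show (∃ w, S (H1.lab w) ∧ H1.G.Adj w a') ↔
        (∃ w : H1.V ⊕ H2.V, S ((H1.union H2).lab w) ∧ (H1.union H2).G.Adj w (Sum.inl a'))
      constructor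
      · rintro ⟨w, hw, hAd⟩
        exact ⟨Sum.inl w, hw, hAd⟩
      · rintro ⟨w | w, hw, hAd⟩
        · exact ⟨w, hw, hAd⟩
        · exact Bool.noConfusion hAd
    · show (false = true) ↔
        (∃ w : H1.V ⊕ H2.V, S ((H1.union H2).lab w) ∧ (H1.union H2).G.Adj w (Sum.inr b'))
      constructor
      · exact fun h => Bool.noConfusion h
      · rintro ⟨w | w, hw, hAd⟩
        · exact Bool.noConfusion hAd
        · exact (hS2 w hw).elim
    · show (∃ w, S (H1.lab w) ∧ H1.G.Adj a w) ↔
        (∃ w : H1.V ⊕ H2.V, S ((H1.union H2).lab w) ∧ (H1.union H2).G.Adj (Sum.inl a) w)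
      constructor
      · rintro ⟨w, hw, hAd⟩
        exact ⟨Sum.inl w, hw, hAd⟩
      · rintro ⟨w | w, hw, hAd⟩
        · exact ⟨w, hw, hAd⟩
        · exact Bool.noConfusion hAd
    · exact Iff.rfl
    · exact Iff.rfl
    · show (false = true) ↔
        (∃ w : H1.V ⊕ H2.V, S ((H1.union H2).lab w) ∧ (H1.union H2).G.Adj (Sum.inr b) w)
      constructor
      · exact fun h => Bool.noConfusion h
      · rintro ⟨w | w, hw, hAd⟩
        · exact Bool.noConfusion hAd
        · exact (hS2 w hw).elim
    · exact Iff.rfl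
    · exact Iff.rfl
  · rintro (_ | ⟨a | b, h⟩) <;> rfl

theorem merge_union_right {H1 H2 : LGraph k} (hS1 : ∀ a : H1.V, ¬ S (H1.lab a)) :
    LIso (merge S i (H1.union H2)) (H1.union (merge S i H2)) := by
  refine LIso.mk'
    ⟨fun x => match x with
      | none => Sum.inr none
      | some ⟨Sum.inl a, _⟩ => Sum.inl a
      | some ⟨Sum.inr b, h⟩ => Sum.inr (some ⟨b, h⟩),
     fun y => match y with
      | Sum.inl a => some ⟨Sum.inl a, hS1 a⟩
      | Sum.inr none => none
      | Sum.inr (some b) => some ⟨Sum.inr b.1, b.2⟩,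
     ?_, ?_⟩ ?_ ?_
  · rintro (_ | ⟨a | b, h⟩) <;> rfl
  · rintro (a | (_ | b)) <;> rfl
  · rintro (_ | ⟨a | b, hu⟩) (_ | ⟨a' | b', hv⟩)
    · exact Iff.rfl
    · show (false = true) ↔
        (∃ w : H1.V ⊕ H2.V, S ((H1.union H2).lab w) ∧ (H1.union H2).G.Adj w (Sum.inl a'))
      constructor
      · exact fun h => Bool.noConfusion h
      · rintro ⟨w | w, hw, hAd⟩
        · exact (hS1 w hw).elim
        · exact Bool.noConfusion hAd
    · show (∃ w, S (H2.lab w) ∧ H2.G.Adj w b') ↔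
        (∃ w : H1.V ⊕ H2.V, S ((H1.union H2).lab w) ∧ (H1.union H2).G.Adj w (Sum.inr b'))
      constructor
      · rintro ⟨w, hw, hAd⟩
        exact ⟨Sum.inr w, hw, hAd⟩
      · rintro ⟨w | w, hw, hAd⟩
        · exact (hS1 w hw).elim
        · exact ⟨w, hw, hAd⟩
    · show (false = true) ↔
        (∃ w : H1.V ⊕ H2.V, S ((H1.union H2).lab w) ∧ (H1.union H2).G.Adj (Sum.inl a) w)
      constructor
      · exact fun h => Bool.noConfusion h
      · rintro ⟨w | w, hw, hAd⟩
        · exact (hS1 w hw).elim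
        · exact Bool.noConfusion hAd
    · exact Iff.rfl
    · exact Iff.rfl
    · show (∃ w, S (H2.lab w) ∧ H2.G.Adj b w) ↔
        (∃ w : H1.V ⊕ H2.V, S ((H1.union H2).lab w) ∧ (H1.union H2).G.Adj (Sum.inr b) w)
      constructor
      · rintro ⟨w, hw, hAd⟩
        exact ⟨Sum.inr w, hw, hAd⟩
      · rintro ⟨w | w, hw, hAd⟩
        · exact (hS1 w hw).elim
        · exact ⟨w, hw, hAd⟩
    · exact Iff.rfl
    · exact Iff.rfl
  · rintro (_ | ⟨a | b, h⟩) <;> rfl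

theorem merge_union_fuse {H1 H2 : LGraph k} (hi : S i) :
    LIso (fuse i ((merge S i H1).union (merge S i H2))) (merge S i (H1.union H2)) := by
  refine LIso.mk'
    ⟨fun x => match x with
      | none => none
      | some ⟨Sum.inl none, h⟩ => absurd rfl h
      | some ⟨Sum.inl (some a), _⟩ => some ⟨Sum.inl a.1, a.2⟩
      | some ⟨Sum.inr none, h⟩ => absurd rfl h
      | some ⟨Sum.inr (some b), _⟩ => some ⟨Sum.inr b.1, b.2⟩,
     fun y => match y with
      | none => none
      | some ⟨Sum.inl a, h⟩ =>
        some ⟨Sum.inl (some ⟨a, h⟩), fun hh => h ((show H1.lab a = i from hh).symm ▸ hi)⟩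
      | some ⟨Sum.inr b, h⟩ =>
        some ⟨Sum.inr (some ⟨b, h⟩), fun hh => h ((show H2.lab b = i from hh).symm ▸ hi)⟩,
     ?_, ?_⟩ ?_ ?_
  · rintro (_ | ⟨(_ | a) | (_ | b), h⟩) <;> first | exact absurd rfl h | rfl
  · rintro (_ | ⟨a | b, h⟩) <;> rfl
  · rintro (_ | ⟨(_ | a) | (_ | b), hu⟩) (_ | ⟨(_ | a') | (_ | b'), hv⟩) <;>
      first | exact absurd rfl hu | exact absurd rfl hv | skip
    · exact Iff.rfl
    · -- none vs inl a'
      show (∃ w : H1.V ⊕ H2.V, S ((H1.union H2).lab w) ∧ (H1.union H2).G.Adj w (Sum.inl a'.1)) ↔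
        (∃ w, ((merge S i H1).union (merge S i H2)).lab w = i ∧
          ((merge S i H1).union (merge S i H2)).G.Adj w (Sum.inl (some a')))
      constructor
      · rintro ⟨w | w, hw, hAd⟩
        · exact ⟨Sum.inl none, rfl, ⟨w, hw, hAd⟩⟩
        · exact Bool.noConfusion hAd
      · rintro ⟨(_ | w1) | (_ | w2), hw, hAd⟩
        · obtain ⟨w', h1, h2⟩ := hAd
          exact ⟨Sum.inl w', h1, h2⟩
        · exact (w1.2 ((show H1.lab w1.1 = i from hw).symm ▸ hi)).elim
        · exact Bool.noConfusion hAd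
        · exact (w2.2 ((show H2.lab w2.1 = i from hw).symm ▸ hi)).elim
    · -- none vs inr b'
      show (∃ w : H1.V ⊕ H2.V, S ((H1.union H2).lab w) ∧ (H1.union H2).G.Adj w (Sum.inr b'.1)) ↔
        (∃ w, ((merge S i H1).union (merge S i H2)).lab w = i ∧
          ((merge S i H1).union (merge S i H2)).G.Adj w (Sum.inr (some b')))
      constructor
      · rintro ⟨w | w, hw, hAd⟩
        · exact Bool.noConfusion hAd
        · exact ⟨Sum.inr none, rfl, ⟨w, hw, hAd⟩⟩
      · rintro ⟨(_ | w1) | (_ | w2), hw, hAd⟩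
        · exact Bool.noConfusion hAd
        · exact (w1.2 ((show H1.lab w1.1 = i from hw).symm ▸ hi)).elim
        · obtain ⟨w', h1, h2⟩ := hAd
          exact ⟨Sum.inr w', h1, h2⟩
        · exact (w2.2 ((show H2.lab w2.1 = i from hw).symm ▸ hi)).elim
    · -- inl a vs none
      show (∃ w : H1.V ⊕ H2.V, S ((H1.union H2).lab w) ∧ (H1.union H2).G.Adj (Sum.inl a.1) w) ↔
        (∃ w, ((merge S i H1).union (merge S i H2)).lab w = i ∧
          ((merge S i H1).union (merge S i H2)).G.Adj (Sum.inl (some a)) w)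
      constructor
      · rintro ⟨w | w, hw, hAd⟩
        · exact ⟨Sum.inl none, rfl, ⟨w, hw, hAd⟩⟩
        · exact Bool.noConfusion hAd
      · rintro ⟨(_ | w1) | (_ | w2), hw, hAd⟩
        · obtain ⟨w', h1, h2⟩ := hAd
          exact ⟨Sum.inl w', h1, h2⟩
        · exact (w1.2 ((show H1.lab w1.1 = i from hw).symm ▸ hi)).elim
        · exact Bool.noConfusion hAd
        · exact (w2.2 ((show H2.lab w2.1 = i from hw).symm ▸ hi)).elim
    · exact Iff.rfl
    · exact Iff.rfl
    · -- inr b vs none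
      show (∃ w : H1.V ⊕ H2.V, S ((H1.union H2).lab w) ∧ (H1.union H2).G.Adj (Sum.inr b.1) w) ↔
        (∃ w, ((merge S i H1).union (merge S i H2)).lab w = i ∧
          ((merge S i H1).union (merge S i H2)).G.Adj (Sum.inr (some b)) w)
      constructor
      · rintro ⟨w | w, hw, hAd⟩
        · exact Bool.noConfusion hAd
        · exact ⟨Sum.inr none, rfl, ⟨w, hw, hAd⟩⟩
      · rintro ⟨(_ | w1) | (_ | w2), hw, hAd⟩
        · exact Bool.noConfusion hAd
        · exact (w1.2 ((show H1.lab w1.1 = i from hw).symm ▸ hi)).elim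
        · obtain ⟨w', h1, h2⟩ := hAd
          exact ⟨Sum.inr w', h1, h2⟩
        · exact (w2.2 ((show H2.lab w2.1 = i from hw).symm ▸ hi)).elim
    · exact Iff.rfl
    · exact Iff.rfl
  · rintro (_ | ⟨(_ | a) | (_ | b), h⟩) <;> first | exact absurd rfl h | rfl

end LGraph
namespace LGraph

variable {k : ℕ} {S : Fin k → Prop} {i j a b : Fin k}

theorem LIso.lab_exists {H1 H2 : LGraph k} (h : LIso H1 H2) (ha : ∃ v, H1.lab v = a) :
    ∃ v, H2.lab v = a := by
  obtain ⟨e, hl⟩ := h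
  obtain ⟨v, hv⟩ := ha
  exact ⟨e v, by rw [hl, hv]⟩

theorem LIso.exactlyOne {H1 H2 : LGraph k} (h : LIso H1 H2) (h1 : ExactlyOne H1 i) :
    ExactlyOne H2 i := by
  obtain ⟨e, hl⟩ := h
  obtain ⟨v0, h0, hu⟩ := h1
  refine ⟨e v0, show H2.lab (e v0) = i by rw [hl, h0], fun w hw => ?_⟩
  have h2 := hl (e.symm w)
  rw [e.apply_symm_apply] at h2
  have h3 : e.symm w = v0 := hu _ (h2.symm.trans hw)
  rw [← h3, e.apply_symm_apply]

theorem LIso.exactlyTwo {H1 H2 : LGraph k} (h : LIso H1 H2) (h1 : ExactlyTwo H1 i) :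
    ExactlyTwo H2 i := by
  obtain ⟨e, hl⟩ := h
  obtain ⟨u0, v0, hne, hu0, hv0, hc⟩ := h1
  refine ⟨e u0, e v0, fun hh => hne (e.toEquiv.injective hh), by rw [hl, hu0],
    by rw [hl, hv0], fun w hw => ?_⟩
  have h2 := hl (e.symm w)
  rw [e.apply_symm_apply] at h2
  rcases hc (e.symm w) (h2.symm.trans hw) with h3 | h3
  · left; rw [← h3, e.apply_symm_apply]
  · right; rw [← h3, e.apply_symm_apply]

theorem LIso.joinUseful {H1 H2 : LGraph k} (h : LIso H1 H2) (h1 : joinUseful a b H1) :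
    joinUseful a b H2 := by
  obtain ⟨e, hl⟩ := h
  obtain ⟨u, v, hne, ha, hb, hn⟩ := h1
  exact ⟨e u, e v, fun hh => hne (e.toEquiv.injective hh), by rw [hl, ha], by rw [hl, hb],
    fun hh => hn (e.map_rel_iff.mp hh)⟩

theorem LIso.relabelUseful {H1 H2 : LGraph k} (h : LIso H1 H2) (h1 : relabelUseful a H1) :
    relabelUseful a H2 :=
  LIso.lab_exists h h1

theorem LIso.fuseUseful {H1 H2 : LGraph k} (h : LIso H1 H2) (h1 : fuseUseful i H1) :
    fuseUseful i H2 := by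
  obtain ⟨e, hl⟩ := h
  obtain ⟨u, v, hne, hu, hv⟩ := h1
  exact ⟨e u, e v, fun hh => hne (e.toEquiv.injective hh), by rw [hl, hu], by rw [hl, hv]⟩

theorem merge_exactlyOne_self (hi : S i) (H : LGraph k) : ExactlyOne (merge S i H) i := by
  refine ⟨none, rfl, ?_⟩
  rintro (_ | u) h
  · rfl
  · exact absurd (h.symm ▸ hi : S (H.lab u.1)) u.2

theorem merge_exactlyOne (hi : S i) (hj : ¬ S j) {H : LGraph k} (h : ExactlyOne H j) :
    ExactlyOne (merge S i H) j := by
  obtain ⟨v0, h0, hu⟩ := h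
  refine ⟨some ⟨v0, h0.symm ▸ hj⟩, h0, ?_⟩
  rintro (_ | u) h
  · exact absurd (h ▸ hi : S j) hj
  · exact congrArg some (Subtype.ext (hu u.1 h))

theorem merge_exactlyTwo (hi : S i) (hj : ¬ S j) {H : LGraph k} (h : ExactlyTwo H j) :
    ExactlyTwo (merge S i H) j := by
  obtain ⟨u0, v0, hne, hu0, hv0, hc⟩ := h
  refine ⟨some ⟨u0, hu0.symm ▸ hj⟩, some ⟨v0, hv0.symm ▸ hj⟩,
    fun hh => hne (Subtype.ext_iff.mp (Option.some_injective _ hh)), hu0, hv0, ?_⟩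
  rintro (_ | w) hw
  · exact absurd (hw ▸ hi : S j) hj
  · rcases hc w.1 hw with h3 | h3
    · exact Or.inl (congrArg some (Subtype.ext h3))
    · exact Or.inr (congrArg some (Subtype.ext h3))

theorem merge_joinUseful (ha : ¬ S a) (hb : ¬ S b) {H : LGraph k}
    (h : joinUseful a b H) : joinUseful a b (merge S i H) := by
  obtain ⟨u, v, hne, hu, hv, hn⟩ := h
  exact ⟨some ⟨u, hu.symm ▸ ha⟩, some ⟨v, hv.symm ▸ hb⟩,
    fun hh => hne (Subtype.ext_iff.mp (Option.some_injective _ hh)), hu, hv, hn⟩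

theorem merge_relabelUseful (ha : ¬ S a) {H : LGraph k}
    (h : relabelUseful a H) : relabelUseful a (merge S i H) := by
  obtain ⟨v, hv⟩ := h
  exact ⟨some ⟨v, hv.symm ▸ ha⟩, hv⟩

theorem exactlyTwo_union {H1 H2 : LGraph k} (h1 : ExactlyOne H1 i) (h2 : ExactlyOne H2 i) :
    ExactlyTwo (H1.union H2) i := by
  obtain ⟨u0, hu0, hu⟩ := h1
  obtain ⟨v0, hv0, hv⟩ := h2
  refine ⟨Sum.inl u0, Sum.inr v0, (fun hh => by cases hh), hu0, hv0, ?_⟩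
  rintro (w | w) hw
  · exact Or.inl (congrArg Sum.inl (hu w hw))
  · exact Or.inr (congrArg Sum.inr (hv w hw))

theorem exactlyTwo_fuseUseful {H : LGraph k} (h : ExactlyTwo H i) : fuseUseful i H := by
  obtain ⟨u, v, hne, hu, hv, -⟩ := h
  exact ⟨u, v, hne, hu, hv⟩

theorem fuse_singleton {H : LGraph k} (h : ExactlyOne H i) : LIso (fuse i H) H := by
  obtain ⟨v0, h0, hu⟩ := h
  refine LIso.mk'
    ⟨fun x => match x with
      | none => v0
      | some u => u.1,
     fun v => if h : H.lab v = i then none else some ⟨v, h⟩,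
     ?_, ?_⟩ ?_ ?_
  · rintro (_ | u)
    · show (if h : H.lab v0 = i then (none : (fuse i H).V) else some ⟨v0, h⟩) = none
      rw [dif_pos h0]
    · show (if h : H.lab u.1 = i then (none : (fuse i H).V) else some ⟨u.1, h⟩) = some u
      rw [dif_neg u.2]
  · intro v
    by_cases h : H.lab v = i
    · show (match (if hh : H.lab v = i then (none : (fuse i H).V) else some ⟨v, hh⟩) with
        | none => v0 | some u => u.1) = v
      rw [dif_pos h]
      exact (hu v h).symm
    · show (match (if hh : H.lab v = i then (none : (fuse i H).V) else some ⟨v, hh⟩) with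
        | none => v0 | some u => u.1) = v
      rw [dif_neg h]
  · rintro (_ | u) (_ | v)
    · exact ⟨fun hh => (H.G.loopless.irrefl v0 hh).elim, False.elim⟩
    · show H.G.Adj v0 v.1 ↔ (∃ w, H.lab w = i ∧ H.G.Adj w v.1)
      constructor
      · intro hh
        exact ⟨v0, h0, hh⟩
      · rintro ⟨w, hw, hA⟩
        exact (hu w hw) ▸ hA
    · show H.G.Adj u.1 v0 ↔ (∃ w, H.lab w = i ∧ H.G.Adj u.1 w)
      constructor
      · intro hh
        exact ⟨v0, h0, hh⟩
      · rintro ⟨w, hw, hA⟩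
        exact (hu w hw) ▸ hA
    · exact Iff.rfl
  · rintro (_ | u)
    · exact h0
    · rfl

theorem merge_singleVertex (hSj : S j) :
    LIso (merge S i (FuseExpr.singleVertex j)) (FuseExpr.singleVertex i) := by
  refine LIso.mk'
    ⟨fun _ => PUnit.unit,
     fun _ => none,
     ?_, ?_⟩ ?_ ?_
  · rintro (_ | ⟨u, h⟩)
    · rfl
    · exact absurd hSj h
  · intro v
    rfl
  · rintro (_ | u) (_ | v)
    · exact ⟨fun hh => hh.elim, False.elim⟩
    · exact absurd hSj v.2
    · exact absurd hSj u.2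
    · exact absurd hSj u.2
  · rintro (_ | u)
    · rfl
    · exact absurd hSj u.2

theorem relabel_singleVertex :
    LIso (relabel j i (FuseExpr.singleVertex j)) (FuseExpr.singleVertex i) := by
  refine LIso.mk' (Equiv.refl _) (fun u v => Iff.rfl) (fun v => ?_)
  show i = (if j = j then i else j)
  rw [if_pos rfl]

end LGraph
namespace FuseExpr

open LGraph

/-- A `merge`-variant of `LIso` congruence. -/
theorem merge_liso {k : ℕ} {S : Fin k → Prop} {i : Fin k} {H1 H2 : LGraph k}
    (h : LIso H1 H2) : LIso (merge S i H1) (merge S i H2) := by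
  obtain ⟨e, hl⟩ := h
  exact LGraph.merge_congr e (fun v => by rw [hl]) (fun v _ => hl v)

/-- Main construction: simulate merging all `S`-labeled vertices into one vertex of
label `i` by an expression all of whose fuse nodes are of the restricted shape. -/
theorem main_merge {k : ℕ} (ψ : FuseExpr k) :
    ∀ (S : Fin k → Prop) (i : Fin k), ψ.NoUseless → ψ.FusesExactlyTwoFromDifferentSides →
    S i → (∃ v, S (ψ.eval.lab v)) →
    ∃ χ : FuseExpr k, LIso χ.eval (merge S i ψ.eval) ∧ χ.NoUseless ∧
      χ.FusesExactlyTwoFromDifferentSides ∧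
      (∀ j, ¬ S j → ψ.ChainWithOneFromEachSide j → χ.ChainWithOneFromEachSide j) := by
  induction ψ with
  | intro j =>
    intro S i _ _ hi hex
    have hSj : S j := by
      obtain ⟨v, hv⟩ := hex
      exact hv
    by_cases hij : j = i
    · refine ⟨.intro i, (merge_singleVertex hSj).symm, trivial, trivial, ?_⟩
      intro j' _ hc
      exact hc.elim
    · refine ⟨.relabel j i (.intro j),
        (relabel_singleVertex).trans (merge_singleVertex hSj).symm,
        ⟨hij, ⟨PUnit.unit, rfl⟩, trivial⟩, trivial, ?_⟩
      intro j' _ hc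
      exact hc.elim
  | union ψ1 ψ2 ih1 ih2 =>
    intro S i hnu hf hi hex
    obtain ⟨nu1, nu2⟩ := hnu
    obtain ⟨f1, f2⟩ := hf
    by_cases h1 : ∃ v, S (ψ1.eval.lab v) <;> by_cases h2 : ∃ v, S (ψ2.eval.lab v)
    · -- both sides meet the class
      obtain ⟨χ1, l1, nuχ1, fχ1, ch1⟩ := ih1 S i nu1 f1 hi h1
      obtain ⟨χ2, l2, nuχ2, fχ2, ch2⟩ := ih2 S i nu2 f2 hi h2
      have e1 : ExactlyOne χ1.eval i := LIso.exactlyOne l1.symm (merge_exactlyOne_self hi _)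
      have e2 : ExactlyOne χ2.eval i := LIso.exactlyOne l2.symm (merge_exactlyOne_self hi _)
      have hT2 : ExactlyTwo (LGraph.union χ1.eval χ2.eval) i := exactlyTwo_union e1 e2
      refine ⟨.fuse i (.union χ1 χ2),
        (fuse_congr (union_congr l1 l2)).trans (merge_union_fuse hi),
        ⟨exactlyTwo_fuseUseful hT2, nuχ1, nuχ2⟩,
        ⟨hT2, ⟨e1, e2⟩, fχ1, fχ2⟩, ?_⟩
      intro j hj hc
      obtain ⟨c1, c2⟩ := hc
      exact ⟨LIso.exactlyOne l1.symm (merge_exactlyOne hi hj c1),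
        LIso.exactlyOne l2.symm (merge_exactlyOne hi hj c2)⟩
    · -- only left side
      obtain ⟨χ1, l1, nuχ1, fχ1, ch1⟩ := ih1 S i nu1 f1 hi h1
      have hS2 : ∀ b : ψ2.eval.V, ¬ S (ψ2.eval.lab b) := fun b hb => h2 ⟨b, hb⟩
      refine ⟨.union χ1 ψ2,
        (union_congr l1 (LIso.refl _)).trans (merge_union_left hS2).symm,
        ⟨nuχ1, nu2⟩, ⟨fχ1, f2⟩, ?_⟩
      intro j hj hc
      obtain ⟨c1, c2⟩ := hc
      exact ⟨LIso.exactlyOne l1.symm (merge_exactlyOne hi hj c1), c2⟩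
    · -- only right side
      obtain ⟨χ2, l2, nuχ2, fχ2, ch2⟩ := ih2 S i nu2 f2 hi h2
      have hS1 : ∀ a : ψ1.eval.V, ¬ S (ψ1.eval.lab a) := fun a ha => h1 ⟨a, ha⟩
      refine ⟨.union ψ1 χ2,
        (union_congr (LIso.refl _) l2).trans (merge_union_right hS1).symm,
        ⟨nu1, nuχ2⟩, ⟨f1, fχ2⟩, ?_⟩
      intro j hj hc
      obtain ⟨c1, c2⟩ := hc
      exact ⟨c1, LIso.exactlyOne l2.symm (merge_exactlyOne hi hj c2)⟩
    · -- impossible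
      exfalso
      obtain ⟨v, hv⟩ := hex
      rcases v with v | v
      · exact h1 ⟨v, hv⟩
      · exact h2 ⟨v, hv⟩
  | join a b ψ0 ih =>
    intro S i hnu hf hi hex
    obtain ⟨hab, hju, nu0⟩ := hnu
    have hex0 : ∃ v, S (ψ0.eval.lab v) := hex
    obtain ⟨χ0, l0, nuχ0, fχ0, ch0⟩ := ih S i nu0 hf hi hex0
    by_cases hSa : S a <;> by_cases hSb : S b
    · -- both in class : join inert after merge
      refine ⟨χ0, l0.trans (merge_join_inert hSa hSb).symm, nuχ0, fχ0, ?_⟩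
      intro j hj hc
      exact hc.elim
    · -- a in class, b not
      have hA : ∃ w, ψ0.eval.lab w = a := by
        obtain ⟨u, v, _, ha, _, _⟩ := hju
        exact ⟨u, ha⟩
      have hiso : LIso (LGraph.join i b (merge S i ψ0.eval)) (merge S i (LGraph.join a b ψ0.eval)) :=
        (merge_join_absorb hi hSa hSb hab hA).symm
      by_cases huse : LGraph.joinUseful i b χ0.eval
      · refine ⟨.join i b χ0, (join_congr l0).trans hiso,
          ⟨fun h => hSb (h ▸ hi), huse, nuχ0⟩, fχ0, ?_⟩
        intro j hj hc
        exact hc.elim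
      · refine ⟨χ0, (join_useless huse).symm.trans ((join_congr l0).trans hiso), nuχ0, fχ0, ?_⟩
        intro j hj hc
        exact hc.elim
    · -- b in class, a not
      have hB : ∃ w, ψ0.eval.lab w = b := by
        obtain ⟨u, v, _, _, hb, _⟩ := hju
        exact ⟨v, hb⟩
      have hiso : LIso (LGraph.join i a (merge S i ψ0.eval)) (merge S i (LGraph.join a b ψ0.eval)) :=
        ((merge_join_absorb hi hSb hSa (Ne.symm hab) hB).symm).trans
          (merge_liso (join_comm ψ0.eval)).symm
      by_cases huse : LGraph.joinUseful i a χ0.eval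
      · refine ⟨.join i a χ0, (join_congr l0).trans hiso,
          ⟨fun h => hSa (h ▸ hi), huse, nuχ0⟩, fχ0, ?_⟩
        intro j hj hc
        exact hc.elim
      · refine ⟨χ0, (join_useless huse).symm.trans ((join_congr l0).trans hiso), nuχ0, fχ0, ?_⟩
        intro j hj hc
        exact hc.elim
    · -- neither in class : commute
      have huse : LGraph.joinUseful a b χ0.eval :=
        LIso.joinUseful l0.symm (merge_joinUseful hSa hSb hju)
      refine ⟨.join a b χ0, (join_congr l0).trans (merge_join_comm hi hSa hSb).symm,
        ⟨hab, huse, nuχ0⟩, fχ0, ?_⟩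
      intro j hj hc
      exact hc.elim
  | relabel a b ψ0 ih =>
    intro S i hnu hf hi hex
    obtain ⟨hab, hru, nu0⟩ := hnu
    by_cases hSb : S b
    · -- b in class : absorb a into the class
      have hex0 : ∃ v, (fun x => S x ∨ x = a) (ψ0.eval.lab v) := by
        obtain ⟨v, hv⟩ := hex
        by_cases h : ψ0.eval.lab v = a
        · exact ⟨v, Or.inr h⟩
        · refine ⟨v, Or.inl ?_⟩
          have : S (if ψ0.eval.lab v = a then b else ψ0.eval.lab v) := hv
          rwa [if_neg h] at this
      obtain ⟨χ0, l0, nuχ0, fχ0, ch0⟩ := ih (fun x => S x ∨ x = a) i nu0 hf (Or.inl hi) hex0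
      refine ⟨χ0, l0.trans (merge_relabel_absorbIn hSb).symm, nuχ0, fχ0, ?_⟩
      intro j hj hc
      exact hc.elim
    · by_cases hSa : S a
      · -- a in class, b not : the class loses a
        have hex0 : ∃ v, (fun x => S x ∧ x ≠ a) (ψ0.eval.lab v) := by
          obtain ⟨v, hv⟩ := hex
          have hv' : S (if ψ0.eval.lab v = a then b else ψ0.eval.lab v) := hv
          by_cases h : ψ0.eval.lab v = a
          · rw [if_pos h] at hv'
            exact absurd hv' hSb
          · rw [if_neg h] at hv'
            exact ⟨v, hv', h⟩
        by_cases hia : i = a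
        · -- need an auxiliary target label t
          obtain ⟨v0, hSv0, hv0a⟩ := hex0
          set t := ψ0.eval.lab v0 with ht_def
          obtain ⟨χ0, l0, nuχ0, fχ0, ch0⟩ := ih (fun x => S x ∧ x ≠ a) t nu0 hf
            ⟨hSv0, hv0a⟩ ⟨v0, hSv0, hv0a⟩
          have hta : t ≠ a := hv0a
          have hti : t ≠ i := by rw [hia]; exact hta
          have hiso := (merge_relabel_out' (S := S) (i := i) (H := ψ0.eval)
            hSa hSb hSv0 hta).symm
          have huse2 : LGraph.relabelUseful t (LGraph.relabel a b χ0.eval) := by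
            refine LIso.relabelUseful (relabel_congr l0).symm ?_
            refine ⟨none, ?_⟩
            show (if t = a then b else t) = t
            rw [if_neg hta]
          have huse1 : LGraph.relabelUseful a χ0.eval := by
            refine LIso.relabelUseful l0.symm ?_
            exact merge_relabelUseful (fun h => h.2 rfl) hru
          refine ⟨.relabel t i (.relabel a b χ0),
            (relabel_congr (relabel_congr l0)).trans hiso,
            ⟨hti, huse2, ⟨hab, huse1, nuχ0⟩⟩, fχ0, ?_⟩
          intro j hj hc
          exact hc.elim
        · obtain ⟨χ0, l0, nuχ0, fχ0, ch0⟩ := ih (fun x => S x ∧ x ≠ a) i nu0 hf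
            ⟨hi, hia⟩ hex0
          have huse1 : LGraph.relabelUseful a χ0.eval := by
            refine LIso.relabelUseful l0.symm ?_
            exact merge_relabelUseful (fun h => h.2 rfl) hru
          refine ⟨.relabel a b χ0,
            (relabel_congr l0).trans (merge_relabel_out hSa hSb hi hia).symm,
            ⟨hab, huse1, nuχ0⟩, fχ0, ?_⟩
          intro j hj hc
          exact hc.elim
      · -- neither a nor b in class : commute
        have hex0 : ∃ v, S (ψ0.eval.lab v) := by
          obtain ⟨v, hv⟩ := hex
          have hv' : S (if ψ0.eval.lab v = a then b else ψ0.eval.lab v) := hv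
          by_cases h : ψ0.eval.lab v = a
          · rw [if_pos h] at hv'
            exact absurd hv' hSb
          · rw [if_neg h] at hv'
            exact ⟨v, hv'⟩
        obtain ⟨χ0, l0, nuχ0, fχ0, ch0⟩ := ih S i nu0 hf hi hex0
        have huse1 : LGraph.relabelUseful a χ0.eval :=
          LIso.relabelUseful l0.symm (merge_relabelUseful hSa hru)
        refine ⟨.relabel a b χ0,
          (relabel_congr l0).trans (merge_relabel_comm hi hSa hSb).symm,
          ⟨hab, huse1, nuχ0⟩, fχ0, ?_⟩
        intro j hj hc
        exact hc.elim
  | fuse j ψ0 ih =>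
    intro S i hnu hf hi hex
    obtain ⟨hfu, nu0⟩ := hnu
    obtain ⟨hT2, hch, f0⟩ := hf
    by_cases hSj : S j
    · -- fused label in class : fuse is absorbed
      have hex0 : ∃ v, S (ψ0.eval.lab v) := by
        obtain ⟨u, v, _, hu, _⟩ := hfu
        exact ⟨u, hu.symm ▸ hSj⟩
      obtain ⟨χ0, l0, nuχ0, fχ0, ch0⟩ := ih S i nu0 f0 hi hex0
      refine ⟨χ0, l0.trans (merge_fuse_absorb hSj).symm, nuχ0, fχ0, ?_⟩
      intro j' hj' hc
      exact ch0 j' hj' hc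
    · -- fused label outside class : commute
      have hex0 : ∃ v, S (ψ0.eval.lab v) := by
        obtain ⟨v, hv⟩ := hex
        rcases v with _ | u
        · exact absurd hv hSj
        · exact ⟨u.1, hv⟩
      obtain ⟨χ0, l0, nuχ0, fχ0, ch0⟩ := ih S i nu0 f0 hi hex0
      have hT2' : ExactlyTwo χ0.eval j :=
        LIso.exactlyTwo l0.symm (merge_exactlyTwo hi hSj hT2)
      refine ⟨.fuse j χ0, (fuse_congr l0).trans (merge_fuse_comm hi hSj).symm,
        ⟨exactlyTwo_fuseUseful hT2', nuχ0⟩,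
        ⟨hT2', ch0 j hSj hch, fχ0⟩, ?_⟩
      intro j' hj' hc
      exact ch0 j' hj' hc

end FuseExpr
namespace FuseExpr

open LGraph

theorem clean {k : ℕ} (φ : FuseExpr k) : φ.WF →
    ∃ φ' : FuseExpr k, LIso φ'.eval φ.eval ∧ φ'.NoUseless ∧
      φ'.FusesExactlyTwoFromDifferentSides := by
  induction φ with
  | intro i =>
    intro _
    exact ⟨.intro i, LIso.refl _, trivial, trivial⟩
  | union φ1 φ2 ih1 ih2 =>
    rintro ⟨w1, w2⟩
    obtain ⟨φ1', l1, nu1, f1⟩ := ih1 w1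
    obtain ⟨φ2', l2, nu2, f2⟩ := ih2 w2
    exact ⟨.union φ1' φ2', union_congr l1 l2, ⟨nu1, nu2⟩, ⟨f1, f2⟩⟩
  | join i j φ0 ih =>
    rintro ⟨hij, w0⟩
    obtain ⟨φ0', l0, nu0, f0⟩ := ih w0
    by_cases huse : LGraph.joinUseful i j φ0'.eval
    · exact ⟨.join i j φ0', join_congr l0, ⟨hij, huse, nu0⟩, f0⟩
    · exact ⟨φ0', (join_useless huse).symm.trans (join_congr l0), nu0, f0⟩
  | relabel i j φ0 ih =>
    rintro ⟨hij, w0⟩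
    obtain ⟨φ0', l0, nu0, f0⟩ := ih w0
    by_cases huse : LGraph.relabelUseful i φ0'.eval
    · exact ⟨.relabel i j φ0', relabel_congr l0, ⟨hij, huse, nu0⟩, f0⟩
    · exact ⟨φ0', (relabel_useless huse).symm.trans (relabel_congr l0), nu0, f0⟩
  | fuse i φ0 ih =>
    rintro ⟨w0, hex⟩
    obtain ⟨φ0', l0, nu0, f0⟩ := ih w0
    have hex' : ∃ v, φ0'.eval.lab v = i := LIso.lab_exists l0.symm hex
    by_cases huse : LGraph.fuseUseful i φ0'.eval
    · obtain ⟨χ, lχ, nuχ, fχ, -⟩ := main_merge φ0' (fun x => x = i) i nu0 f0 rfl hex'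
      exact ⟨χ, (lχ.trans (fuse_merge i φ0'.eval).symm).trans (fuse_congr l0), nuχ, fχ⟩
    · obtain ⟨v0, hv0⟩ := hex'
      have E1 : ExactlyOne φ0'.eval i := by
        refine ⟨v0, hv0, fun w hw => ?_⟩
        by_contra hne
        exact huse ⟨w, v0, hne, hw, hv0⟩
      exact ⟨φ0', (fuse_singleton E1).symm.trans (fuse_congr l0), nu0, f0⟩

end FuseExpr

/-- Every fuse-`k`-expression can be transformed into an equivalent
one without useless operator occurrences in which the argument of every fuse node
`θ_i` is a chain of fuse nodes over a union, contains exactly two vertices of label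
`i`, one coming from each side of the union. -/
theorem exists_fuses_exactly_two_from_different_sides {k : ℕ} (φ : FuseExpr k)
    (hwf : φ.WF) :
    ∃ φ' : FuseExpr k, LGraph.LIso φ'.eval φ.eval ∧ φ'.NoUseless ∧
      φ'.FusesExactlyTwoFromDifferentSides :=
  FuseExpr.clean φ hwf
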